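/- For every m ∈ ℕ and every nonempty bounded open set K ⊆ ℝ³ there exists a constant C > 0 such that for every polynomial map v : ℝ³ → ℝ³ of degree at most m there exists an antisymmetric real 3×3 matrix B with ∫_K ‖∇v(x) + B‖_F² dx ≤ C · ∫_K ‖ε(v)(x)‖_F² dx. (Equivalently, inf over rigid displacements Λ(x) = B·x + b of ∫_K ‖∇(v + Λ)(x)‖_F² dx is bounded by C times ∫_K ‖ε(v)(x)‖_F² dx.) -/

import Mathlib

open MeasureTheory Matrix

/-- `pderiv3 v i j x` is the partial derivative `∂ⱼ vᵢ (x)` of the `i`-th component of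
`v : ℝ³ → ℝ³` in the `j`-th coordinate direction at `x`. -/
noncomputable def pderiv3 (v : (Fin 3 → ℝ) → (Fin 3 → ℝ)) (i j : Fin 3) (x : Fin 3 → ℝ) : ℝ :=
  fderiv ℝ (fun y => v y i) x (Pi.single j 1)

/-- `jacMat v x` is the Jacobian matrix `∇v(x)` with entries `(∇v(x))ᵢⱼ = ∂ⱼvᵢ(x)`. -/
noncomputable def jacMat (v : (Fin 3 → ℝ) → (Fin 3 → ℝ)) (x : Fin 3 → ℝ) :
    Matrix (Fin 3) (Fin 3) ℝ :=
  Matrix.of fun i j => pderiv3 v i j x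

/-- `symGrad v x` is the symmetric gradient `ε(v)(x)`, the 3×3 matrix with entries
`(∂ⱼvᵢ(x) + ∂ᵢvⱼ(x)) / 2`. -/
noncomputable def symGrad (v : (Fin 3 → ℝ) → (Fin 3 → ℝ)) (x : Fin 3 → ℝ) :
    Matrix (Fin 3) (Fin 3) ℝ :=
  Matrix.of fun i j => (pderiv3 v i j x + pderiv3 v j i x) / 2

/-- `frobSq M` is the square of the Frobenius norm of the matrix `M`. -/
def frobSq (M : Matrix (Fin 3) (Fin 3) ℝ) : ℝ := ∑ i, ∑ j, (M i j) ^ 2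


section DerivA
open MvPolynomial

lemma hasFDerivAt_eval (Q : MvPolynomial (Fin 3) ℝ) (x : Fin 3 → ℝ) :
    HasFDerivAt (fun y => MvPolynomial.eval y Q)
      (∑ j : Fin 3, MvPolynomial.eval x (MvPolynomial.pderiv j Q) •
        (ContinuousLinearMap.proj j : (Fin 3 → ℝ) →L[ℝ] ℝ)) x := by
  induction Q using MvPolynomial.induction_on with
  | C a =>
      have : (∑ j : Fin 3, MvPolynomial.eval x (MvPolynomial.pderiv j (C a)) •
          (ContinuousLinearMap.proj j : (Fin 3 → ℝ) →L[ℝ] ℝ)) = 0 := by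
        simp [pderiv_C]
      rw [this]
      simpa using hasFDerivAt_const (MvPolynomial.eval x (C a)) x |>.congr_fderiv rfl |>.congr_of_eventuallyEq
        (Filter.Eventually.of_forall fun y => by simp)
  | add p q hp hq =>
      have := hp.add hq
      refine (this.congr_of_eventuallyEq ?_).congr_fderiv (Eq.symm ?_)
      · exact Filter.Eventually.of_forall fun y => by simp
      · ext y
        simp [ContinuousLinearMap.sum_apply, Finset.sum_add_distrib, add_mul]
  | mul_X p k hp =>
      have hk := (ContinuousLinearMap.proj k : (Fin 3 → ℝ) →L[ℝ] ℝ).hasFDerivAt (x := x)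
      have := hp.mul hk
      refine (this.congr_of_eventuallyEq ?_).congr_fderiv (Eq.symm ?_)
      · exact Filter.Eventually.of_forall fun y => by simp
      · ext y
        simp only [ContinuousLinearMap.sum_apply, ContinuousLinearMap.smul_apply,
          ContinuousLinearMap.proj_apply, ContinuousLinearMap.add_apply, smul_eq_mul,
          pderiv_mul, pderiv_X, map_add, eval_mul, eval_X, Pi.single_apply,
          MvPolynomial.eval_add]
        have hterm : ∀ j : Fin 3, ((MvPolynomial.eval x) ((pderiv j) p) * x k +
              (MvPolynomial.eval x) p * (MvPolynomial.eval x) (if k = j then 1 else 0)) * y j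
            = x k * ((MvPolynomial.eval x) ((pderiv j) p) * y j) +
              (if k = j then (MvPolynomial.eval x) p * y j else 0) := by
          intro j; split <;> simp <;> ring
        rw [Finset.sum_congr rfl fun j _ => hterm j, Finset.sum_add_distrib, ← Finset.mul_sum,
          Finset.sum_ite_eq]
        simp [add_comm]

lemma differentiable_eval (Q : MvPolynomial (Fin 3) ℝ) :
    Differentiable ℝ (fun y => MvPolynomial.eval y Q) := fun x =>
  (hasFDerivAt_eval Q x).differentiableAt

lemma continuous_eval' (Q : MvPolynomial (Fin 3) ℝ) :
    Continuous (fun y => MvPolynomial.eval y Q) := (differentiable_eval Q).continuous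

lemma pderiv3_eval' (P : Fin 3 → MvPolynomial (Fin 3) ℝ) (i j : Fin 3) (x : Fin 3 → ℝ) :
    fderiv ℝ (fun y => MvPolynomial.eval y (P i)) x (Pi.single j 1)
      = MvPolynomial.eval x (MvPolynomial.pderiv j (P i)) := by
  rw [(hasFDerivAt_eval (P i) x).fderiv]
  simp [ContinuousLinearMap.sum_apply, Pi.single_apply, Finset.sum_ite_eq]

lemma eval_const_of_pderiv_eval_zero (Q : MvPolynomial (Fin 3) ℝ)
    (h : ∀ (k : Fin 3) (x : Fin 3 → ℝ), MvPolynomial.eval x (MvPolynomial.pderiv k Q) = 0)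
    (x y : Fin 3 → ℝ) : MvPolynomial.eval x Q = MvPolynomial.eval y Q :=
  is_const_of_fderiv_eq_zero (differentiable_eval Q)
    (fun z => by rw [(hasFDerivAt_eval Q z).fderiv]; simp [h]) x y

lemma poly_eq_zero_of_eqOn_open {K : Set (Fin 3 → ℝ)} (hKo : IsOpen K) (hKne : K.Nonempty)
    (Q : MvPolynomial (Fin 3) ℝ) (h : ∀ x ∈ K, MvPolynomial.eval x Q = 0) : Q = 0 := by
  obtain ⟨z, hz⟩ := hKne
  have h0 : (fun x => MvPolynomial.eval x Q) =ᶠ[nhds z] 0 :=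
    Filter.eventually_of_mem (hKo.mem_nhds hz) h
  have := (AnalyticOnNhd.eval_mvPolynomial Q).eqOn_zero_of_preconnected_of_eventuallyEq_zero
    isPreconnected_univ (Set.mem_univ z) h0
  exact MvPolynomial.funext fun x => by simpa using this (Set.mem_univ x)

lemma pderiv_comm' (i j : Fin 3) (p : MvPolynomial (Fin 3) ℝ) :
    MvPolynomial.pderiv i (MvPolynomial.pderiv j p)
      = MvPolynomial.pderiv j (MvPolynomial.pderiv i p) := by
  induction p using MvPolynomial.induction_on with
  | C a => simp
  | add p q hp hq => simp [map_add, hp, hq]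
  | mul_X p k hp =>
      have hps : ∀ (a b : Fin 3), MvPolynomial.pderiv a
          ((Pi.single b (1 : MvPolynomial (Fin 3) ℝ) : Fin 3 → MvPolynomial (Fin 3) ℝ) k) = 0 := by
        intro a b
        rcases eq_or_ne k b with rfl | hne
        · simp
        · simp [Pi.single_eq_of_ne hne]
      simp only [pderiv_mul, pderiv_X, map_add, hp, hps]
      ring

end DerivA
section DerivB
open MvPolynomial

/-- Gradient entry: `∂ⱼ (P i)` evaluated at `x`. -/
noncomputable def gradE (P : Fin 3 → MvPolynomial (Fin 3) ℝ) (i j : Fin 3) (x : Fin 3 → ℝ) : ℝ :=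
  MvPolynomial.eval x (MvPolynomial.pderiv j (P i))

lemma gradE_cont (P : Fin 3 → MvPolynomial (Fin 3) ℝ) (i j : Fin 3) :
    Continuous (fun x => gradE P i j x) := continuous_eval' _

lemma gradE_add (P Q : Fin 3 → MvPolynomial (Fin 3) ℝ) (i j : Fin 3) (x : Fin 3 → ℝ) :
    gradE (P + Q) i j x = gradE P i j x + gradE Q i j x := by
  simp [gradE, map_add]

lemma gradE_smul (t : ℝ) (P : Fin 3 → MvPolynomial (Fin 3) ℝ) (i j : Fin 3) (x : Fin 3 → ℝ) :
    gradE (t • P) i j x = t * gradE P i j x := by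
  simp [gradE, Pi.smul_apply, _root_.map_smul, MvPolynomial.smul_eval]

/-- Rigidity: if the symmetric gradient vanishes on a nonempty open set, then the Jacobian
corrected by the skew part at `x₀` vanishes on `K`. -/
lemma ja_zero_of_sg_zero {K : Set (Fin 3 → ℝ)} (hKo : IsOpen K) (hKne : K.Nonempty)
    {x₀ : Fin 3 → ℝ} (hx₀ : x₀ ∈ K) (P : Fin 3 → MvPolynomial (Fin 3) ℝ)
    (h : ∀ i j : Fin 3, ∀ x ∈ K, gradE P i j x + gradE P j i x = 0) :
    ∀ i j : Fin 3, ∀ x ∈ K,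
      gradE P i j x - (gradE P i j x₀ - gradE P j i x₀) / 2 = 0 := by
  have hσ : ∀ i j : Fin 3, pderiv j (P i) + pderiv i (P j) = 0 := by
    intro i j
    apply poly_eq_zero_of_eqOn_open hKo hKne
    intro x hx
    simpa [gradE, map_add] using h i j x hx
  have hE : ∀ a b c : Fin 3,
      pderiv a (pderiv c (P b)) + pderiv a (pderiv b (P c)) = 0 := by
    intro a b c
    have := congrArg (pderiv a) (hσ b c)
    simpa [map_add] using this
  have hT : ∀ (i j k : Fin 3) (x : Fin 3 → ℝ),
      MvPolynomial.eval x (pderiv k (pderiv j (P i))) = 0 := by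
    intro i j k x
    have e1 := hE k i j
    have e2 := hE j i k
    have e3 := hE i k j
    rw [pderiv_comm' j k (P i), pderiv_comm' j i (P k)] at e2
    rw [pderiv_comm' i k (P j)] at e3
    have h2 : pderiv k (pderiv j (P i)) + pderiv k (pderiv j (P i)) = 0 := by
      linear_combination e1 + e2 - e3
    have := congrArg (MvPolynomial.eval x) h2
    simp only [map_add, map_zero] at this
    linarith
  have hconst : ∀ (i j : Fin 3) (x : Fin 3 → ℝ), gradE P i j x = gradE P i j x₀ := by
    intro i j x
    exact eval_const_of_pderiv_eval_zero _ (fun k y => hT i j k y) x x₀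
  intro i j x hx
  have h0 := h i j x₀ hx₀
  rw [hconst i j x]
  linarith
end DerivB
section Quad
open MeasureTheory

lemma quad_bound {N : ℕ} {α : Type*} [Fintype α] (K : Set (Fin 3 → ℝ))
    (hKo : IsOpen K) (hKbd : Bornology.IsBounded K)
    (F G : (Fin N → ℝ) → α → (Fin 3 → ℝ) → ℝ)
    (hFa : ∀ c d a x, F (c + d) a x = F c a x + F d a x)
    (hFs : ∀ (t : ℝ) c a x, F (t • c) a x = t * F c a x)
    (hGa : ∀ c d a x, G (c + d) a x = G c a x + G d a x)
    (hGs : ∀ (t : ℝ) c a x, G (t • c) a x = t * G c a x)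
    (hFc : ∀ c a, Continuous (F c a)) (hGc : ∀ c a, Continuous (G c a))
    (hker : ∀ c, (∀ a, ∀ x ∈ K, G c a x = 0) → (∀ a, ∀ x ∈ K, F c a x = 0)) :
    ∃ C > 0, ∀ c, (∫ x in K, ∑ a, (F c a x) ^ 2) ≤ C * ∫ x in K, ∑ a, (G c a x) ^ 2 := by
  classical
  have hmeas : MeasurableSet K := hKo.measurableSet
  have hint : ∀ f : (Fin 3 → ℝ) → ℝ, Continuous f → IntegrableOn f K := fun f hf =>
    (hf.continuousOn.integrableOn_compact hKbd.isCompact_closure).mono_set subset_closure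
  set QF : (Fin N → ℝ) → ℝ := fun c => ∫ x in K, ∑ a, (F c a x) ^ 2 with hQFdef
  set QG : (Fin N → ℝ) → ℝ := fun c => ∫ x in K, ∑ a, (G c a x) ^ 2 with hQGdef
  have hF0 : ∀ a x, F 0 a x = 0 := by
    intro a x; have := hFs 0 0 a x; simpa using this
  have hG0 : ∀ a x, G 0 a x = 0 := by
    intro a x; have := hGs 0 0 a x; simpa using this
  have hQFnn : ∀ c, 0 ≤ QF c := fun c =>
    setIntegral_nonneg hmeas fun x _ => Finset.sum_nonneg fun a _ => sq_nonneg _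
  have hQGnn : ∀ c, 0 ≤ QG c := fun c =>
    setIntegral_nonneg hmeas fun x _ => Finset.sum_nonneg fun a _ => sq_nonneg _
  -- kernel submodule
  let Z : Submodule ℝ (Fin N → ℝ) :=
    { carrier := {c | ∀ a, ∀ x ∈ K, G c a x = 0}
      add_mem' := fun hc hd a x hx => by rw [hGa]; rw [hc a x hx, hd a x hx, add_zero]
      zero_mem' := fun a x _ => hG0 a x
      smul_mem' := fun t c hc a x hx => by rw [hGs, hc a x hx, mul_zero] }
  have hFZ : ∀ c ∈ Z, ∀ a, ∀ x ∈ K, F c a x = 0 := fun c hc => hker c hc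
  -- invariance under adding kernel elements
  have hQGinv : ∀ c n, n ∈ Z → QG (c + n) = QG c := by
    intro c n hn
    apply setIntegral_congr_fun hmeas
    intro x hx
    exact Finset.sum_congr rfl fun a _ => by rw [hGa, hn a x hx, add_zero]
  have hQFinv : ∀ c n, n ∈ Z → QF (c + n) = QF c := by
    intro c n hn
    apply setIntegral_congr_fun hmeas
    intro x hx
    exact Finset.sum_congr rfl fun a _ => by rw [hFa, hFZ n hn a x hx, add_zero]
  have hQF_of_mem : ∀ c ∈ Z, QF c = 0 := by
    intro c hc
    have : QF c = ∫ x in K, (0 : ℝ) :=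
      setIntegral_congr_fun hmeas fun x hx =>
        Finset.sum_eq_zero fun a _ => by rw [hFZ c hc a x hx]; ring
    simpa using this
  have hQG_of_mem : ∀ c ∈ Z, QG c = 0 := by
    intro c hc
    have : QG c = ∫ x in K, (0 : ℝ) :=
      setIntegral_congr_fun hmeas fun x hx =>
        Finset.sum_eq_zero fun a _ => by rw [hc a x hx]; ring
    simpa using this
  have hmem_of_QG : ∀ c, QG c = 0 → c ∈ Z := by
    intro c h0 a x hx
    have hcont : Continuous fun x => ∑ a, (G c a x) ^ 2 :=
      continuous_finset_sum _ fun a _ => (hGc c a).pow 2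
    have hi : Integrable (fun x => ∑ a, (G c a x) ^ 2) (volume.restrict K) := hint _ hcont
    have hae := (integral_eq_zero_iff_of_nonneg
      (fun x => Finset.sum_nonneg fun a _ => sq_nonneg _) hi).mp h0
    have heq : Set.EqOn (fun x => ∑ a, (G c a x) ^ 2) 0 K :=
      MeasureTheory.Measure.eqOn_open_of_ae_eq hae hKo hcont.continuousOn continuousOn_const
    have hx0 : ∑ a, (G c a x) ^ 2 = 0 := heq hx
    have := (Finset.sum_eq_zero_iff_of_nonneg (fun a _ => sq_nonneg (G c a x))).mp hx0
      a (Finset.mem_univ a)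
    exact pow_eq_zero_iff (two_ne_zero) |>.mp this
  -- homogeneity
  have hQFsmul : ∀ (t : ℝ) c, QF (t • c) = t ^ 2 * QF c := by
    intro t c
    rw [hQFdef]
    simp only [hFs, mul_pow, ← Finset.mul_sum, integral_const_mul]
  have hQGsmul : ∀ (t : ℝ) c, QG (t • c) = t ^ 2 * QG c := by
    intro t c
    rw [hQGdef]
    simp only [hGs, mul_pow, ← Finset.mul_sum, integral_const_mul]
  -- decomposition of arbitrary c along the standard basis
  have hsumF : ∀ (s : Finset (Fin N)) (g : Fin N → (Fin N → ℝ)) a x,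
      F (∑ k ∈ s, g k) a x = ∑ k ∈ s, F (g k) a x := by
    intro s g a x
    induction s using Finset.induction with
    | empty => simpa using hF0 a x
    | insert _ _ h ih => rw [Finset.sum_insert h, hFa, ih, Finset.sum_insert h]
  have hsumG : ∀ (s : Finset (Fin N)) (g : Fin N → (Fin N → ℝ)) a x,
      G (∑ k ∈ s, g k) a x = ∑ k ∈ s, G (g k) a x := by
    intro s g a x
    induction s using Finset.induction with
    | empty => simpa using hG0 a x
    | insert _ _ h ih => rw [Finset.sum_insert h, hGa, ih, Finset.sum_insert h]
  have hsingle : ∀ (c : Fin N → ℝ) (k : Fin N),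
      (Pi.single k (c k) : Fin N → ℝ) = c k • (Pi.single k 1 : Fin N → ℝ) := by
    intro c k; funext j
    simp [Pi.single_apply, mul_ite]
  have hFdec : ∀ c a x, F c a x = ∑ k, c k * F (Pi.single k 1) a x := by
    intro c a x
    conv_lhs => rw [← Finset.univ_sum_single c]
    rw [hsumF]
    exact Finset.sum_congr rfl fun k _ => by rw [hsingle, hFs]
  have hGdec : ∀ c a x, G c a x = ∑ k, c k * G (Pi.single k 1) a x := by
    intro c a x
    conv_lhs => rw [← Finset.univ_sum_single c]
    rw [hsumG]
    exact Finset.sum_congr rfl fun k _ => by rw [hsingle, hGs]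
  -- continuity of QF and QG
  have quadCont : ∀ (H : (Fin N → ℝ) → α → (Fin 3 → ℝ) → ℝ),
      (∀ c a, Continuous (H c a)) →
      (∀ c a x, H c a x = ∑ k, c k * H (Pi.single k 1) a x) →
      Continuous fun c => ∫ x in K, ∑ a, (H c a x) ^ 2 := by
    intro H hHc hHdec
    have key : (fun c => ∫ x in K, ∑ a, (H c a x) ^ 2) = fun c => ∑ k, ∑ l,
        (c k * c l) * ∫ x in K, ∑ a, H (Pi.single k 1) a x * H (Pi.single l 1) a x := by
      funext c
      have h1 : ∀ x : Fin 3 → ℝ, ∑ a, (H c a x) ^ 2 = ∑ k, ∑ l,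
          (c k * c l) * ∑ a, H (Pi.single k 1) a x * H (Pi.single l 1) a x := by
        intro x
        have : ∀ a, (H c a x) ^ 2 = ∑ k, ∑ l,
            (c k * H (Pi.single k 1) a x) * (c l * H (Pi.single l 1) a x) := by
          intro a
          rw [pow_two, hHdec c a x, Finset.sum_mul_sum]
        rw [Finset.sum_congr rfl fun a _ => this a]
        rw [Finset.sum_comm]
        refine Finset.sum_congr rfl fun k _ => ?_
        rw [Finset.sum_comm]
        refine Finset.sum_congr rfl fun l _ => ?_
        rw [Finset.mul_sum]
        exact Finset.sum_congr rfl fun a _ => by ring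
      simp only [h1]
      rw [integral_finset_sum]
      · refine Finset.sum_congr rfl fun k _ => ?_
        rw [integral_finset_sum]
        · exact Finset.sum_congr rfl fun l _ => integral_const_mul _ _
        · intro l _
          exact hint _ (continuous_const.mul
            (continuous_finset_sum _ fun a _ => (hHc _ a).mul (hHc _ a)))
      · intro k _
        exact hint _ (continuous_finset_sum _ fun l _ => continuous_const.mul
          (continuous_finset_sum _ fun a _ => (hHc _ a).mul (hHc _ a)))
    rw [key]
    exact continuous_finset_sum _ fun k _ => continuous_finset_sum _ fun l _ =>
      ((continuous_apply k).mul (continuous_apply l)).mul continuous_const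
  have hQFcont : Continuous QF := quadCont F hFc hFdec
  have hQGcont : Continuous QG := quadCont G hGc hGdec
  obtain ⟨W, hW⟩ := Z.exists_isCompl
  by_cases hWbot : W = ⊥
  · refine ⟨1, one_pos, fun c => ?_⟩
    have hcZ : c ∈ Z := by
      have hZtop : Z = ⊤ := by
        have := hW.sup_eq_top; rwa [hWbot, sup_bot_eq] at this
      rw [hZtop]; trivial
    show QF c ≤ 1 * QG c
    rw [hQF_of_mem c hcZ, hQG_of_mem c hcZ]; simp
  · haveI : Nontrivial ↥W := Submodule.nontrivial_iff_ne_bot.mpr hWbot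
    have hsne : (Metric.sphere (0 : ↥W) 1).Nonempty := NormedSpace.sphere_nonempty.mpr zero_le_one
    obtain ⟨u, hu, humin⟩ := (isCompact_sphere (0 : ↥W) 1).exists_isMinOn hsne
      ((hQGcont.comp continuous_subtype_val).continuousOn)
    obtain ⟨z, hz, hzmax⟩ := (isCompact_sphere (0 : ↥W) 1).exists_isMaxOn hsne
      ((hQFcont.comp continuous_subtype_val).continuousOn)
    have hunorm : ‖u‖ = 1 := by simpa using mem_sphere_zero_iff_norm.mp hu
    have hμpos : 0 < QG ↑u := by
      rcases (hQGnn ↑u).eq_or_lt with h0 | h0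
      · exfalso
        have hmem : (↑u : Fin N → ℝ) ∈ Z := hmem_of_QG _ h0.symm
        have hm2 : (↑u : Fin N → ℝ) ∈ Z ⊓ W := ⟨hmem, u.2⟩
        rw [hW.inf_eq_bot] at hm2
        have hu0 : u = 0 := Subtype.ext (by simpa using hm2)
        rw [hu0] at hunorm; simp at hunorm
      · exact h0
    set M0 := QF ↑z with hM0
    set μ0 := QG ↑u with hμ0
    have hM0nn : 0 ≤ M0 := hQFnn _
    refine ⟨M0 / μ0 + 1,
      add_pos_of_nonneg_of_pos (div_nonneg hM0nn hμpos.le) one_pos, fun c => ?_⟩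
    have hctop : c ∈ Z ⊔ W := by rw [hW.sup_eq_top]; trivial
    obtain ⟨nz, hnz, w, hwW, hsum⟩ := Submodule.mem_sup.mp hctop
    show QF c ≤ (M0 / μ0 + 1) * QG c
    have hQFc : QF c = QF w := by rw [← hsum, add_comm]; exact hQFinv w nz hnz
    have hQGc : QG c = QG w := by rw [← hsum, add_comm]; exact hQGinv w nz hnz
    by_cases hw0 : w = 0
    · rw [hQFc, hQGc, hw0, hQF_of_mem 0 Z.zero_mem, hQG_of_mem 0 Z.zero_mem]; simp
    · have htpos : (0 : ℝ) < ‖w‖ := norm_pos_iff.mpr hw0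
      set w' : ↥W := ⟨w, hwW⟩ with hw'
      set u' : ↥W := ‖w‖⁻¹ • w' with hu'
      have hw'norm : ‖w'‖ = ‖w‖ := rfl
      have hu'sph : u' ∈ Metric.sphere (0 : ↥W) 1 := by
        rw [mem_sphere_zero_iff_norm]
        have hnu : ‖u'‖ = ‖(u' : Fin N → ℝ)‖ := rfl
        have hcu : ((u' : Fin N → ℝ)) = ‖w‖⁻¹ • w := rfl
        rw [hnu, hcu, norm_smul]
        simp [abs_of_pos (inv_pos.mpr htpos), inv_mul_cancel₀ htpos.ne']
      have hcoe : w = ‖w‖ • (↑u' : Fin N → ℝ) := by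
        rw [show ((u' : Fin N → ℝ)) = ‖w‖⁻¹ • w from rfl, smul_smul,
          mul_inv_cancel₀ htpos.ne', one_smul]
      have hQFw : QF w = ‖w‖ ^ 2 * QF ↑u' := by
        conv_lhs => rw [hcoe]
        rw [hQFsmul]
      have hQGw : QG w = ‖w‖ ^ 2 * QG ↑u' := by
        conv_lhs => rw [hcoe]
        rw [hQGsmul]
      have h1 : QF ↑u' ≤ M0 := hzmax hu'sph
      have h2 : μ0 ≤ QG ↑u' := humin hu'sph
      rw [hQFc, hQGc, hQFw, hQGw]
      have hq : 0 ≤ QG ↑u' := hQGnn _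
      have hf : 0 ≤ QF ↑u' := hQFnn _
      have key : ‖w‖ ^ 2 * QF ↑u' ≤ (M0 / μ0) * (‖w‖ ^ 2 * QG ↑u') := by
        rw [div_mul_eq_mul_div, le_div_iff₀ hμpos]
        nlinarith [sq_nonneg ‖w‖, mul_le_mul_of_nonneg_left h2 (sq_nonneg ‖w‖),
          mul_le_mul_of_nonneg_left h1 (sq_nonneg ‖w‖)]
      calc ‖w‖ ^ 2 * QF ↑u' ≤ (M0 / μ0) * (‖w‖ ^ 2 * QG ↑u') := key
        _ ≤ (M0 / μ0 + 1) * (‖w‖ ^ 2 * QG ↑u') := by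
            apply mul_le_mul_of_nonneg_right (by linarith) (by positivity)
end Quad
set_option maxHeartbeats 1000000 in
set_option synthInstance.maxHeartbeats 400000 in
/-- Elementwise Korn inequality on a single element `K` for the polynomial local space:
for every degree bound `m` and nonempty bounded open `K ⊆ ℝ³` there is `C > 0` such that
every polynomial map `v` of degree at most `m` admits an antisymmetric matrix `B` with
`∫_K ‖∇v + B‖_F² ≤ C ∫_K ‖ε(v)‖_F²`. -/
theorem korn_polynomial (m : ℕ) (K : Set (Fin 3 → ℝ)) (hKo : IsOpen K) (hKne : K.Nonempty)
    (hKbd : Bornology.IsBounded K) :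
    ∃ C > 0, ∀ P : Fin 3 → MvPolynomial (Fin 3) ℝ, (∀ i, (P i).totalDegree ≤ m) →
      ∃ B : Matrix (Fin 3) (Fin 3) ℝ, Bᵀ = -B ∧
        (∫ x in K, frobSq (jacMat (fun y i => MvPolynomial.eval y (P i)) x + B)) ≤
          C * ∫ x in K, frobSq (symGrad (fun y i => MvPolynomial.eval y (P i)) x) := by
  classical
  obtain ⟨x₀, hx₀⟩ := hKne
  let ι : (Fin 3 → MvPolynomial.restrictTotalDegree (Fin 3) ℝ m) →ₗ[ℝ] (Fin 3 → MvPolynomial (Fin 3) ℝ) :=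
    { toFun := fun Q i => (Q i : MvPolynomial (Fin 3) ℝ)
      map_add' := fun a b => rfl
      map_smul' := fun t a => rfl }
  let bV := Module.finBasis ℝ (Fin 3 → MvPolynomial.restrictTotalDegree (Fin 3) ℝ m)
  set Nn := Module.finrank ℝ (Fin 3 → MvPolynomial.restrictTotalDegree (Fin 3) ℝ m) with hNn
  let L : (Fin Nn → ℝ) →ₗ[ℝ] (Fin 3 → MvPolynomial (Fin 3) ℝ) :=
    ι ∘ₗ bV.equivFun.symm.toLinearMap
  set F : (Fin Nn → ℝ) → (Fin 3 × Fin 3) → (Fin 3 → ℝ) → ℝ := fun c a x =>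
    gradE (L c) a.1 a.2 x - (gradE (L c) a.1 a.2 x₀ - gradE (L c) a.2 a.1 x₀) / 2 with hF
  set G : (Fin Nn → ℝ) → (Fin 3 × Fin 3) → (Fin 3 → ℝ) → ℝ := fun c a x =>
    (gradE (L c) a.1 a.2 x + gradE (L c) a.2 a.1 x) / 2 with hG
  have hLadd : ∀ c d : Fin Nn → ℝ, L (c + d) = L c + L d := fun c d => map_add L c d
  have hLsmul : ∀ (t : ℝ) (c : Fin Nn → ℝ), L (t • c) = t • L c := fun t c => map_smul L t c
  have hFa : ∀ c d a x, F (c + d) a x = F c a x + F d a x := by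
    intro c d a x
    simp only [hF, hLadd, gradE_add]
    ring
  have hFs : ∀ (t : ℝ) c a x, F (t • c) a x = t * F c a x := by
    intro t c a x
    simp only [hF, hLsmul, gradE_smul]
    ring
  have hGa : ∀ c d a x, G (c + d) a x = G c a x + G d a x := by
    intro c d a x
    simp only [hG, hLadd, gradE_add]
    ring
  have hGs : ∀ (t : ℝ) c a x, G (t • c) a x = t * G c a x := by
    intro t c a x
    simp only [hG, hLsmul, gradE_smul]
    ring
  have hFc : ∀ c a, Continuous (F c a) := fun c a =>
    (gradE_cont (L c) a.1 a.2).sub continuous_const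
  have hGc : ∀ c a, Continuous (G c a) := fun c a =>
    ((gradE_cont (L c) a.1 a.2).add (gradE_cont (L c) a.2 a.1)).div_const 2
  have hker : ∀ c, (∀ a, ∀ x ∈ K, G c a x = 0) → (∀ a, ∀ x ∈ K, F c a x = 0) := by
    intro c hGz a x hx
    have h' : ∀ i j : Fin 3, ∀ y ∈ K, gradE (L c) i j y + gradE (L c) j i y = 0 := by
      intro i j y hy
      have := hGz (i, j) y hy
      simp only [hG] at this
      linarith
    exact ja_zero_of_sg_zero hKo ⟨x₀, hx₀⟩ hx₀ (L c) h' a.1 a.2 x hx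
  obtain ⟨C, hC0, hCle⟩ := quad_bound K hKo hKbd F G hFa hFs hGa hGs hFc hGc hker
  refine ⟨C, hC0, fun P hdeg => ?_⟩
  let QV : (Fin 3 → MvPolynomial.restrictTotalDegree (Fin 3) ℝ m) := fun i => ⟨P i, (MvPolynomial.mem_restrictTotalDegree _ m (P i)).mpr (hdeg i)⟩
  let c := bV.equivFun QV
  have hLc : L c = P := by
    funext i
    show ((bV.equivFun.symm (bV.equivFun QV)) i : MvPolynomial (Fin 3) ℝ) = P i
    rw [LinearEquiv.symm_apply_apply]
  refine ⟨Matrix.of fun i j => -((gradE P i j x₀ - gradE P j i x₀) / 2), ?_, ?_⟩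
  · ext i j
    simp only [Matrix.transpose_apply, Matrix.neg_apply, Matrix.of_apply]
    ring
  · have hJ : ∀ x, frobSq (jacMat (fun y i => MvPolynomial.eval y (P i)) x +
        Matrix.of fun i j => -((gradE P i j x₀ - gradE P j i x₀) / 2))
        = ∑ a : Fin 3 × Fin 3, (F c a x) ^ 2 := by
      intro x
      rw [frobSq, Fintype.sum_prod_type]
      refine Finset.sum_congr rfl fun i _ => Finset.sum_congr rfl fun j _ => ?_
      have hp3 : pderiv3 (fun y i => MvPolynomial.eval y (P i)) i j x = gradE P i j x :=
        pderiv3_eval' P i j x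
      simp only [hF, hLc, Matrix.add_apply, jacMat, Matrix.of_apply, hp3]
      ring
    have hS : ∀ x, frobSq (symGrad (fun y i => MvPolynomial.eval y (P i)) x)
        = ∑ a : Fin 3 × Fin 3, (G c a x) ^ 2 := by
      intro x
      rw [frobSq, Fintype.sum_prod_type]
      refine Finset.sum_congr rfl fun i _ => Finset.sum_congr rfl fun j _ => ?_
      have hp3 : pderiv3 (fun y i => MvPolynomial.eval y (P i)) i j x = gradE P i j x :=
        pderiv3_eval' P i j x
      have hp3' : pderiv3 (fun y i => MvPolynomial.eval y (P i)) j i x = gradE P j i x :=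
        pderiv3_eval' P j i x
      simp only [hG, hLc, symGrad, Matrix.of_apply, hp3, hp3']
    calc (∫ x in K, frobSq (jacMat (fun y i => MvPolynomial.eval y (P i)) x +
            Matrix.of fun i j => -((gradE P i j x₀ - gradE P j i x₀) / 2)))
        = ∫ x in K, ∑ a : Fin 3 × Fin 3, (F c a x) ^ 2 :=
          integral_congr_ae (Filter.Eventually.of_forall hJ)
      _ ≤ C * ∫ x in K, ∑ a : Fin 3 × Fin 3, (G c a x) ^ 2 := hCle c
      _ = C * ∫ x in K, frobSq (symGrad (fun y i => MvPolynomial.eval y (P i)) x) := by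
          rw [integral_congr_ae (Filter.Eventually.of_forall hS)]
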